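/- Duplicator's interval strategy: for finite linear orders of sizes m and m' with m, m' ≥ 2^q, the two orders satisfy the same first-order sentences of quantifier rank at most q; concretely, the back-and-forth invariant min(|J|, 2^r) = min(|J'|, 2^r) on corresponding intervals can be maintained for r rounds starting from r = q. -/

import Mathlib

open FirstOrder

/-- Quantifier rank of a first-order bounded formula. -/
def qrank {L : Language} {α : Type*} : ∀ {n : ℕ}, L.BoundedFormula α n → ℕ
  | _, .falsum => 0
  | _, .equal _ _ => 0
  | _, .rel _ _ => 0
  | _, .imp f g => max (qrank f) (qrank g)
  | _, .all f => qrank f + 1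

namespace EFProof

/-- Extended pinned-point map: variables plus the two virtual endpoints `-1` and `m`. -/
def W (m : ℕ) {n : ℕ} (v : Fin n → Fin m) : Fin n ⊕ Bool → ℤ
  | .inl i => v i
  | .inr false => -1
  | .inr true => m

lemma W_lb (m : ℕ) {n : ℕ} (v : Fin n → Fin m) (i : Fin n ⊕ Bool) : -1 ≤ W m v i := by
  rcases i with i | b
  · exact le_trans (by norm_num) (Int.ofNat_nonneg _)
  · cases b <;> simp only [W] <;> omega

lemma W_ub (m : ℕ) {n : ℕ} (v : Fin n → Fin m) (i : Fin n ⊕ Bool) : W m v i ≤ m := by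
  rcases i with i | b
  · show ((v i : ℤ)) ≤ m
    exact le_of_lt (by exact_mod_cast (v i).isLt)
  · cases b <;> simp only [W] <;> omega

/-- The back-and-forth invariant with cap `c`. -/
def Inv (c : ℤ) (m m' : ℕ) {n : ℕ} (v : Fin n → Fin m) (v' : Fin n → Fin m') : Prop :=
  ∀ i j : Fin n ⊕ Bool,
    (W m v i ≤ W m v j ↔ W m' v' i ≤ W m' v' j) ∧
    (W m v i ≤ W m v j → min (W m v j - W m v i) c = min (W m' v' j - W m' v' i) c)

lemma min_mono {d d' c c' : ℤ} (hcc : c' ≤ c)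
    (h : min d c = min d' c) : min d c' = min d' c' := by omega

lemma Inv.mono {c c' : ℤ} (hcc : c' ≤ c) {m m' n} {v : Fin n → Fin m}
    {v' : Fin n → Fin m'} (h : Inv c m m' v v') : Inv c' m m' v v' := by
  intro i j
  exact ⟨(h i j).1, fun hle => min_mono hcc ((h i j).2 hle)⟩

lemma Inv.symm {c m m' n} {v : Fin n → Fin m} {v' : Fin n → Fin m'}
    (h : Inv c m m' v v') : Inv c m' m v' v := by
  intro i j
  refine ⟨((h i j).1).symm, fun hle => ?_⟩
  exact ((h i j).2 ((h i j).1.mpr hle)).symm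

lemma min_add {a a' p p' c : ℤ} (ha : 0 ≤ a) (ha' : 0 ≤ a') (hp : 0 ≤ p) (hp' : 0 ≤ p')
    (h1 : min a c = min a' c) (h2 : min p c = min p' c) :
    min (a + p) c = min (a' + p') c := by
  simp only [min_def] at h1 h2 ⊢
  split_ifs at h1 h2 ⊢ <;> omega

/-- Interval-splitting arithmetic: choosing the position of the new point
in the corresponding interval on the other side. -/
lemma choose_split {a b d' c : ℤ} (hc : 1 ≤ c) (ha : 1 ≤ a) (hb : 1 ≤ b) (hd' : 1 ≤ d')
    (hmin : min (a + b) (2 * c) = min d' (2 * c)) :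
    ∃ a', 1 ≤ a' ∧ 1 ≤ d' - a' ∧ min a c = min a' c ∧ min b c = min (d' - a') c := by
  rcases lt_or_ge (a + b) (2 * c) with h | h
  · refine ⟨a, ha, ?_, rfl, ?_⟩ <;> omega
  · rcases le_or_gt a c with h1 | h1
    · refine ⟨a, ha, ?_, rfl, ?_⟩ <;> omega
    · rcases le_or_gt b c with h2 | h2
      · refine ⟨d' - b, ?_, ?_, ?_, ?_⟩ <;> omega
      · refine ⟨c, ?_, ?_, ?_, ?_⟩ <;> omega

/-- W on a snoc'd tuple, at old indices. -/
lemma W_snoc_old {m n : ℕ} (v : Fin n → Fin m) (z : Fin m) (i : Fin n ⊕ Bool) :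
    W m (Fin.snoc v z) (Sum.map Fin.castSucc id i) = W m v i := by
  rcases i with i | b
  · simp [W, Fin.snoc_castSucc]
  · cases b <;> rfl

lemma W_snoc_last {m n : ℕ} (v : Fin n → Fin m) (z : Fin m) :
    W m (Fin.snoc v z) (Sum.inl (Fin.last n)) = z := by
  simp [W]

lemma snoc_index_cases {n : ℕ} (i : Fin (n + 1) ⊕ Bool) :
    (∃ i0 : Fin n ⊕ Bool, i = Sum.map Fin.castSucc id i0) ∨ i = Sum.inl (Fin.last n) := by
  rcases i with i | b
  · rcases Fin.eq_castSucc_or_eq_last i with ⟨j, rfl⟩ | rfl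
    · exact Or.inl ⟨Sum.inl j, rfl⟩
    · exact Or.inr rfl
  · exact Or.inl ⟨Sum.inr b, rfl⟩

/-- The key extension step (Duplicator's answer to a Spoiler move). -/
lemma extend {c : ℤ} (hc : 1 ≤ c) {m m' n : ℕ} {v : Fin n → Fin m} {v' : Fin n → Fin m'}
    (h : Inv (2 * c) m m' v v') (z : Fin m) :
    ∃ z' : Fin m', Inv c m m' (Fin.snoc v z) (Fin.snoc v' z') := by
  -- reduce to finding the integer position of the answer
  suffices hsuff : ∃ zz' : ℤ, 0 ≤ zz' ∧ zz' < m' ∧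
      ∀ i0 : Fin n ⊕ Bool,
        (W m v i0 ≤ (z : ℤ) ↔ W m' v' i0 ≤ zz') ∧
        (W m v i0 ≤ (z : ℤ) → min ((z : ℤ) - W m v i0) c = min (zz' - W m' v' i0) c) ∧
        ((z : ℤ) ≤ W m v i0 ↔ zz' ≤ W m' v' i0) ∧
        ((z : ℤ) ≤ W m v i0 → min (W m v i0 - (z : ℤ)) c = min (W m' v' i0 - zz') c) by
    obtain ⟨zz', h0, h1, hA⟩ := hsuff
    refine ⟨⟨zz'.toNat, by omega⟩, ?_⟩
    have hz' : W m' (Fin.snoc v' ⟨zz'.toNat, by omega⟩) (Sum.inl (Fin.last n)) = zz' := by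
      rw [W_snoc_last]; simp; omega
    intro i j
    rcases snoc_index_cases i with ⟨i0, rfl⟩ | rfl <;>
      rcases snoc_index_cases j with ⟨j0, rfl⟩ | rfl
    · rw [W_snoc_old, W_snoc_old, W_snoc_old, W_snoc_old]
      exact (h.mono (by omega)) i0 j0
    · rw [W_snoc_old, W_snoc_old, W_snoc_last, hz']
      exact ⟨(hA i0).1, (hA i0).2.1⟩
    · rw [W_snoc_old, W_snoc_old, W_snoc_last, hz']
      exact ⟨(hA j0).2.2.1, (hA j0).2.2.2⟩
    · simp only [W_snoc_last]
      exact ⟨by simp, fun _ => by simp⟩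
  -- now find zz'
  have hz0 : (0 : ℤ) ≤ z := Int.ofNat_nonneg _
  have hzm : (z : ℤ) < m := by exact_mod_cast z.isLt
  by_cases hpin : ∃ k : Fin n ⊕ Bool, W m v k = (z : ℤ)
  · obtain ⟨k, hk⟩ := hpin
    have hknotr : ∀ b : Bool, k ≠ Sum.inr b := by
      rintro b rfl
      cases b <;> simp only [W] at hk <;> omega
    refine ⟨W m' v' k, ?_, ?_, ?_⟩
    · rcases k with k | b
      · exact Int.ofNat_nonneg _
      · exact absurd rfl (hknotr b)
    · rcases k with k | b
      · show ((v' k : ℤ)) < m'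
        exact_mod_cast (v' k).isLt
      · exact absurd rfl (hknotr b)
    · intro i0
      have h1 := h i0 k
      have h2 := h k i0
      have h1' := (h.mono (show c ≤ 2 * c by omega)) i0 k
      have h2' := (h.mono (show c ≤ 2 * c by omega)) k i0
      rw [hk] at h1 h2 h1' h2'
      exact ⟨h1.1, h1'.2, h2.1, h2'.2⟩
  · push_neg at hpin
    -- the nearest pinned points below and above
    obtain ⟨xi, hxiS, hxmax⟩ := Finset.exists_max_image
      (Finset.univ.filter (fun i => W m v i ≤ (z : ℤ))) (W m v)
      ⟨Sum.inr false, by rw [Finset.mem_filter]; exact ⟨Finset.mem_univ _, by simp only [W]; omega⟩⟩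
    obtain ⟨yi, hyiS, hymin⟩ := Finset.exists_min_image
      (Finset.univ.filter (fun i => (z : ℤ) ≤ W m v i)) (W m v)
      ⟨Sum.inr true, by rw [Finset.mem_filter]; exact ⟨Finset.mem_univ _, by simp only [W]; omega⟩⟩
    simp only [Finset.mem_filter, Finset.mem_univ, true_and] at hxiS hyiS
    set x := W m v xi with hxdef
    set y := W m v yi with hydef
    have hxz : x < z := lt_of_le_of_ne hxiS (hpin xi)
    have hzy : (z : ℤ) < y := lt_of_le_of_ne hyiS (fun hh => hpin yi hh.symm)
    have hsplit : ∀ i0 : Fin n ⊕ Bool, W m v i0 ≤ x ∨ y ≤ W m v i0 := by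
      intro i0
      rcases le_or_gt (W m v i0) (z : ℤ) with hh | hh
      · exact Or.inl (hxmax i0 (by simp only [Finset.mem_filter, Finset.mem_univ, true_and]; exact hh))
      · exact Or.inr (hymin i0 (by simp only [Finset.mem_filter, Finset.mem_univ, true_and]; exact le_of_lt hh))
    set x' := W m' v' xi with hx'def
    set y' := W m' v' yi with hy'def
    have hxy' : x' < y' := by
      have := (h yi xi).1
      omega
    have hdd : min (y - x) (2 * c) = min (y' - x') (2 * c) :=
      (h xi yi).2 (by omega)
    obtain ⟨a', ha1, ha2, hamin, hbmin⟩ :=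
      choose_split (a := (z : ℤ) - x) (b := y - (z : ℤ)) (d' := y' - x') hc
        (by omega) (by omega) (by omega)
        (by rw [show (z : ℤ) - x + (y - (z : ℤ)) = y - x by ring]; exact hdd)
    refine ⟨x' + a', ?_, ?_, ?_⟩
    · have := W_lb m' v' xi
      omega
    · have := W_ub m' v' yi
      omega
    · intro i0
      rcases hsplit i0 with hlo | hhi
      · have hlo' : W m' v' i0 ≤ x' := (h i0 xi).1.mp hlo
        have hmm : min (x - W m v i0) c = min (x' - W m' v' i0) c :=
          min_mono (by omega) ((h i0 xi).2 hlo)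
        refine ⟨⟨fun _ => by omega, fun _ => by omega⟩, fun _ => ?_,
          ⟨fun hh => by omega, fun hh => by omega⟩, fun hh => by omega⟩
        rw [show (z : ℤ) - W m v i0 = ((z : ℤ) - x) + (x - W m v i0) by ring,
          show x' + a' - W m' v' i0 = a' + (x' - W m' v' i0) by ring]
        exact min_add (by omega) (by omega) (by omega) (by omega) hamin hmm
      · have hhi' : y' ≤ W m' v' i0 := (h yi i0).1.mp hhi
        have hmm : min (W m v i0 - y) c = min (W m' v' i0 - y') c :=
          min_mono (by omega) ((h yi i0).2 hhi)
        refine ⟨⟨fun hh => by omega, fun hh => by omega⟩, fun hh => by omega,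
          ⟨fun _ => by omega, fun _ => by omega⟩, fun _ => ?_⟩
        rw [show W m v i0 - (z : ℤ) = (y - (z : ℤ)) + (W m v i0 - y) by ring,
          show W m' v' i0 - (x' + a') = ((y' - x') - a') + (W m' v' i0 - y') by ring]
        exact min_add (by omega) (by omega) (by omega) (by omega) hbmin hmm

attribute [local instance] Language.orderStructure

instance {M : Type*} [LE M] : Language.order.OrderedStructure M :=
  ⟨fun _ => Iff.rfl⟩

/-- Every term of the order language in context `Empty ⊕ Fin n` is a variable. -/
lemma term_eq {n : ℕ} (t : Language.order.Term (Empty ⊕ Fin n)) :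
    ∃ i : Fin n, t = FirstOrder.Language.Term.var (Sum.inr i) := by
  cases t with
  | var x =>
    rcases x with e | i
    · exact e.elim
    · exact ⟨i, rfl⟩
  | func f ts => exact f.elim

lemma main_induction {m m' : ℕ} {n : ℕ} (φ : Language.order.BoundedFormula Empty n)
    (xs : Empty → Fin m) (xs' : Empty → Fin m') :
    ∀ r : ℕ, qrank φ ≤ r → ∀ (v : Fin n → Fin m) (v' : Fin n → Fin m'),
      Inv ((2 : ℤ) ^ r) m m' v v' →
      (φ.Realize xs v ↔ φ.Realize xs' v') := by
  induction φ with
  | falsum => exact fun _ _ _ _ _ => Iff.rfl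
  | equal t₁ t₂ =>
    intro r _ v v' hinv
    obtain ⟨i, rfl⟩ := term_eq t₁
    obtain ⟨j, rfl⟩ := term_eq t₂
    change v i = v j ↔ v' i = v' j
    have h1 := (hinv (Sum.inl i) (Sum.inl j)).1
    have h2 := (hinv (Sum.inl j) (Sum.inl i)).1
    simp only [W] at h1 h2
    rw [Fin.ext_iff, Fin.ext_iff]
    omega
  | rel R ts =>
    intro r _ v v' hinv
    cases R
    obtain ⟨i, hi⟩ := term_eq (ts 0)
    obtain ⟨j, hj⟩ := term_eq (ts 1)
    change (ts 0).realize (Sum.elim xs v) ≤ (ts 1).realize (Sum.elim xs v) ↔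
      (ts 0).realize (Sum.elim xs' v') ≤ (ts 1).realize (Sum.elim xs' v')
    rw [hi, hj]
    simp only [Language.Term.realize_var, Sum.elim_inr]
    have h1 := (hinv (Sum.inl i) (Sum.inl j)).1
    simp only [W] at h1
    rw [Fin.le_def, Fin.le_def]
    omega
  | imp f g ihf ihg =>
    intro r hr v v' hinv
    simp only [Language.BoundedFormula.realize_imp]
    rw [ihf r (le_trans (le_max_left _ _) hr) v v' hinv,
      ihg r (le_trans (le_max_right _ _) hr) v v' hinv]
  | all f ih =>
    intro r hr v v' hinv
    obtain ⟨r', rfl⟩ : ∃ r', r = r' + 1 := by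
      refine ⟨r - 1, ?_⟩
      have h1 : qrank f + 1 ≤ r := hr
      omega
    have hq : qrank f ≤ r' := by
      have h1 : qrank f + 1 ≤ r' + 1 := hr
      omega
    have hinv2 : Inv (2 * 2 ^ r') m m' v v' := by
      rwa [show (2 : ℤ) * 2 ^ r' = 2 ^ (r' + 1) by ring]
    simp only [Language.BoundedFormula.realize_all]
    constructor
    · intro H b
      obtain ⟨a, ha⟩ := extend (one_le_pow₀ (by norm_num)) hinv2.symm b
      exact (ih r' hq _ _ ha.symm).mp (H a)
    · intro H a
      obtain ⟨b, hb⟩ := extend (one_le_pow₀ (by norm_num)) hinv2 a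
      exact (ih r' hq _ _ hb).mpr (H b)

lemma base_inv (q m m' : ℕ) (hm : 2 ^ q ≤ m) (hm' : 2 ^ q ≤ m') :
    Inv ((2 : ℤ) ^ q) m m' (fun i => i.elim0) (fun i => i.elim0) := by
  zify at hm hm'
  have hpos : (1 : ℤ) ≤ 2 ^ q := one_le_pow₀ (by norm_num)
  rintro (i | b) (j | b')
  · exact i.elim0
  · exact i.elim0
  · exact j.elim0
  · cases b <;> cases b' <;> simp only [W] <;>
      refine ⟨?_, fun _ => ?_⟩ <;>
        first
        | omega
        | (push_cast at hm hm' hpos ⊢; omega)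
        | simp

end EFProof

/-- Finite linear orders of sizes `m, m' ≥ 2^q` satisfy the same first-order
sentences over the signature `{<}` of quantifier rank at most `q`
(Duplicator's interval strategy in the `q`-round EF game). -/
theorem finite_linear_orders_equiv_qrank (q m m' : ℕ)
    (hm : 2 ^ q ≤ m) (hm' : 2 ^ q ≤ m')
    (φ : Language.order.Sentence) (hφ : qrank φ ≤ q) :
    letI := Language.orderStructure (Fin m)
    letI := Language.orderStructure (Fin m')
    ((Fin m) ⊨ φ ↔ (Fin m') ⊨ φ) := by
  letI := Language.orderStructure (Fin m)
  letI := Language.orderStructure (Fin m')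
  exact EFProof.main_induction φ default default q hφ (fun i => i.elim0) (fun i => i.elim0)
    (EFProof.base_inv q m m' hm hm')
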